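/- Complex tight frames give quaternionic tight frames: let V = V₁ + V₂·j ∈ ℍ^{d×n} with V₁, V₂ ∈ ℂ^{d×n}, and let V_ℂ ∈ ℂ^{2d×n} be the matrix obtained by stacking V₁ on top of conj(V₂). If V_ℂ·V_ℂᴴ = B·I_{2d} for some real B > 0, then V·Vᴴ = 2B·I_d as quaternionic matrices (the columns of V form a tight frame for ℍ^d). -/

import Mathlib

open Quaternion Matrix BigOperators

/-- The embedding `ℂ → ℍ` sending `x + y i` to the quaternion `x + y i`. -/
noncomputable def toQ (z : ℂ) : ℍ[ℝ] := ⟨z.re, z.im, 0, 0⟩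

/-- The quaternion unit `j`. -/
noncomputable def qj : ℍ[ℝ] := ⟨0, 0, 1, 0⟩

@[simp] lemma toQ_re (z : ℂ) : (toQ z).re = z.re := rfl
@[simp] lemma toQ_imI (z : ℂ) : (toQ z).imI = z.im := rfl
@[simp] lemma toQ_imJ (z : ℂ) : (toQ z).imJ = 0 := rfl
@[simp] lemma toQ_imK (z : ℂ) : (toQ z).imK = 0 := rfl
@[simp] lemma qj_re : qj.re = 0 := rfl
@[simp] lemma qj_imI : qj.imI = 0 := rfl
@[simp] lemma qj_imJ : qj.imJ = 1 := rfl
@[simp] lemma qj_imK : qj.imK = 0 := rfl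

lemma toQ_add (z w : ℂ) : toQ (z + w) = toQ z + toQ w := by
  ext <;> simp

lemma toQ_sum {α : Type*} (s : Finset α) (f : α → ℂ) :
    toQ (∑ t ∈ s, f t) = ∑ t ∈ s, toQ (f t) :=
  map_sum (AddMonoidHom.mk' toQ toQ_add) f s

lemma key (z w z' w' : ℂ) :
    (toQ z + toQ w * qj) * star (toQ z' + toQ w' * qj) =
      toQ (z * (starRingEnd ℂ) z' + w * (starRingEnd ℂ) w') + toQ (w * z' - z * w') * qj := by
  ext <;> simp [QuaternionAlgebra.mk_mul_mk, QuaternionAlgebra.mk_add_mk,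
    QuaternionAlgebra.star_mk, Complex.ext_iff] <;> ring

/-- Complex tight frames give quaternionic tight frames: if `V = V₁ + V₂·j ∈ ℍ^{d×n}`
with `V₁, V₂ ∈ ℂ^{d×n}`, and the complexification `V_ℂ ∈ ℂ^{2d×n}` (stacking `V₁` on
top of `conj(V₂)`) satisfies `V_ℂ V_ℂᴴ = B I_{2d}` with `B > 0`, then
`V Vᴴ = 2B I_d` as quaternionic matrices. -/
theorem complex_tight_frame_gives_quaternionic_tight_frame (d n : ℕ)
    (V₁ V₂ : Matrix (Fin d) (Fin n) ℂ) (B : ℝ) (hB : 0 < B)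
    (htight : Matrix.fromRows V₁ (V₂.map (starRingEnd ℂ)) *
        (Matrix.fromRows V₁ (V₂.map (starRingEnd ℂ)))ᴴ =
        B • (1 : Matrix (Fin d ⊕ Fin d) (Fin d ⊕ Fin d) ℂ)) :
    (Matrix.of fun i t => toQ (V₁ i t) + toQ (V₂ i t) * qj) *
      (Matrix.of fun i t => toQ (V₁ i t) + toQ (V₂ i t) * qj)ᴴ =
      (2 * B) • (1 : Matrix (Fin d) (Fin d) ℍ[ℝ]) := by
  refine Matrix.ext fun i k => ?_
  have h11 := congrFun (congrFun htight (Sum.inl i)) (Sum.inl k)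
  have h22 := congrFun (congrFun htight (Sum.inr i)) (Sum.inr k)
  have h12 := congrFun (congrFun htight (Sum.inl i)) (Sum.inr k)
  have h21 := congrFun (congrFun htight (Sum.inr i)) (Sum.inl k)
  simp only [Matrix.mul_apply, Matrix.conjTranspose_apply, Matrix.fromRows_apply_inl,
    Matrix.fromRows_apply_inr, Matrix.map_apply, Matrix.smul_apply, Matrix.one_apply,
    Sum.inl.injEq, Sum.inr.injEq, RCLike.star_def, RingHom.id_apply, reduceCtorEq,
    if_false, smul_ite, smul_zero, smul_eq_mul, mul_one] at h11 h12 h21 h22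
  have h22' : ∑ t, V₂ i t * (starRingEnd ℂ) (V₂ k t) = if i = k then (B : ℂ) else 0 := by
    have := congrArg (starRingEnd ℂ) h22
    simpa [map_sum, apply_ite, Complex.conj_ofReal, mul_comm] using this
  have h21' : ∑ t, V₂ i t * V₁ k t = 0 := by
    have := congrArg (starRingEnd ℂ) h21
    simpa [map_sum] using this
  have h12' : ∑ t, V₁ i t * V₂ k t = 0 := by simpa using h12
  simp only [Matrix.mul_apply, Matrix.conjTranspose_apply, Matrix.of_apply,
    Matrix.smul_apply, Matrix.one_apply]
  calc ∑ t, (toQ (V₁ i t) + toQ (V₂ i t) * qj) * star (toQ (V₁ k t) + toQ (V₂ k t) * qj)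
      = ∑ t, (toQ (V₁ i t * (starRingEnd ℂ) (V₁ k t) + V₂ i t * (starRingEnd ℂ) (V₂ k t))
          + toQ (V₂ i t * V₁ k t - V₁ i t * V₂ k t) * qj) :=
        Finset.sum_congr rfl fun t _ => key _ _ _ _
    _ = toQ (∑ t, (V₁ i t * (starRingEnd ℂ) (V₁ k t) + V₂ i t * (starRingEnd ℂ) (V₂ k t)))
          + toQ (∑ t, (V₂ i t * V₁ k t - V₁ i t * V₂ k t)) * qj := by
        rw [Finset.sum_add_distrib, toQ_sum, toQ_sum, Finset.sum_mul]
    _ = (2 * B) • (if i = k then (1 : ℍ[ℝ]) else 0) := by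
        rw [Finset.sum_add_distrib, h11, h22', Finset.sum_sub_distrib, h21', h12', sub_zero]
        by_cases h : i = k <;>
          simp [h] <;> ext <;> simp <;> push_cast <;> ring
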